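/- Let (X, δ) be a diversity and let δ̂ be a function on finite subsets of T_X making (T_X, δ̂) a diversity and satisfying δ̂(κ(Y) ∪ {f}) = f(Y) for all finite Y ⊆ X and all f ∈ T_X. Then δ̂(F) ≥ δ_T(F) for every finite F ⊆ T_X. -/
import Mathlib


open scoped Classical

noncomputable section

/-- A diversity: axioms (D1) and (D2). -/
def IsDiversity {X : Type*} (δ : Finset X → ℝ) : Prop :=
  (∀ A, 0 ≤ δ A) ∧ (∀ A, δ A = 0 ↔ A.card ≤ 1) ∧
    ∀ A B C : Finset X, B ≠ ∅ → δ (A ∪ C) ≤ δ (A ∪ B) + δ (B ∪ C)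

/-- Membership in `P_X`: `f ∅ = 0` and `Σ_{A ∈ 𝓐} f A ≥ δ (⋃ 𝓐)` for every finite
collection `𝓐` of finite subsets of `X`. -/
def MemP {X : Type*} (δ : Finset X → ℝ) (f : Finset X → ℝ) : Prop :=
  f ∅ = 0 ∧ ∀ 𝓐 : Finset (Finset X), δ (𝓐.sup id) ≤ ∑ A ∈ 𝓐, f A

/-- Membership in the tight span `T_X`: the pointwise-minimal elements of `P_X`. -/
def MemT {X : Type*} (δ : Finset X → ℝ) (f : Finset X → ℝ) : Prop :=
  MemP δ f ∧ ∀ g : Finset X → ℝ, MemP δ g → (∀ A, g A ≤ f A) → g = f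

/-- The function `δ_T` on finite subsets of the tight span: `δ_T ∅ = 0` and for nonempty `F`,
`δ_T F = sup { δ(⋃𝓐) - Σ_{A ∈ 𝓐} inf_{f ∈ F} f A : 𝓐 a finite collection of finite subsets }`. -/
noncomputable def deltaT {X : Type*} (δ : Finset X → ℝ) (F : Finset (Finset X → ℝ)) : ℝ :=
  if F = ∅ then 0
  else sSup {r : ℝ | ∃ 𝓐 : Finset (Finset X),
    r = δ (𝓐.sup id) - ∑ A ∈ 𝓐, sInf ((fun f => f A) '' (F : Set (Finset X → ℝ)))}

/-- The Kuratowski-type map `κ` sends `x` to the function `h_x : A ↦ δ (A ∪ {x})`. -/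
def hfun {X : Type*} (δ : Finset X → ℝ) (x : X) : Finset X → ℝ :=
  fun A => δ (A ∪ {x})

section Generic

variable {Y : Type*}

/-- Monotonicity for conditioned diversities: `S ⊆ T` implies `d S ≤ d T`. -/
lemma div_mono_union (d : Finset Y → ℝ) (P : Y → Prop)
    (hsing : ∀ b, P b → d {b} = 0)
    (htri : ∀ A B C : Finset Y, (∀ y ∈ A ∪ B ∪ C, P y) → B ≠ ∅ →
      d (A ∪ C) ≤ d (A ∪ B) + d (B ∪ C)) :
    ∀ (S B : Finset Y), (∀ y ∈ S ∪ B, P y) → d S ≤ d (S ∪ B) := by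
  intro S B
  induction B using Finset.induction_on with
  | empty => intro _; simp
  | @insert b B hb ih =>
    intro hgood
    have hgood' : ∀ y ∈ S ∪ B, P y := by
      intro y hy
      apply hgood
      simp only [Finset.mem_union, Finset.mem_insert] at hy ⊢
      tauto
    have h1 : d S ≤ d (S ∪ B) := ih hgood'
    have hPb : P b := hgood b (by simp)
    have tri := htri (S ∪ B) {b} ∅ (by
      intro y hy
      apply hgood
      simp only [Finset.mem_union, Finset.mem_singleton, Finset.mem_insert,
        Finset.notMem_empty] at hy ⊢
      tauto) (by simp)
    have e1 : (S ∪ B) ∪ (∅ : Finset Y) = S ∪ B := by simp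
    have e2 : (S ∪ B) ∪ {b} = S ∪ insert b B := by
      ext y
      simp only [Finset.mem_union, Finset.mem_singleton, Finset.mem_insert]
      tauto
    have e3 : ({b} : Finset Y) ∪ ∅ = {b} := by simp
    rw [e1, e2, e3, hsing b hPb] at tri
    linarith

lemma div_mono (d : Finset Y → ℝ) (P : Y → Prop)
    (hsing : ∀ b, P b → d {b} = 0)
    (htri : ∀ A B C : Finset Y, (∀ y ∈ A ∪ B ∪ C, P y) → B ≠ ∅ →
      d (A ∪ C) ≤ d (A ∪ B) + d (B ∪ C))
    (S T : Finset Y) (hST : S ⊆ T) (hT : ∀ y ∈ T, P y) : d S ≤ d T := by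
  have := div_mono_union d P hsing htri S T (by
    intro y hy
    exact hT y (by simpa [Finset.union_eq_right.mpr hST] using hy))
  rwa [Finset.union_eq_right.mpr hST] at this

/-- Chain lemma: if each `b i` meets `G`, then `d (G ∪ ⋃ b i) ≤ d G + Σ d (b i)`. -/
lemma div_chain {ι : Type*} (d : Finset Y → ℝ) (P : Y → Prop)
    (htri : ∀ A B C : Finset Y, (∀ y ∈ A ∪ B ∪ C, P y) → B ≠ ∅ →
      d (A ∪ C) ≤ d (A ∪ B) + d (B ∪ C))
    (G : Finset Y) (hGP : ∀ y ∈ G, P y)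
    (I : Finset ι) (b : ι → Finset Y) (hb : ∀ i ∈ I, ∀ y ∈ b i, P y)
    (hmeet : ∀ i ∈ I, ∃ p ∈ b i, p ∈ G) :
    d (G ∪ I.sup b) ≤ d G + ∑ i ∈ I, d (b i) := by
  induction I using Finset.induction_on with
  | empty => simp
  | @insert i I hi ih =>
    have hb' : ∀ j ∈ I, ∀ y ∈ b j, P y := fun j hj => hb j (Finset.mem_insert_of_mem hj)
    have hmeet' : ∀ j ∈ I, ∃ p ∈ b j, p ∈ G := fun j hj => hmeet j (Finset.mem_insert_of_mem hj)
    have hS : d (G ∪ I.sup b) ≤ d G + ∑ j ∈ I, d (b j) := ih hb' hmeet'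
    obtain ⟨p, hpb, hpG⟩ := hmeet i (Finset.mem_insert_self i I)
    have hsupgood : ∀ y ∈ G ∪ I.sup b, P y := by
      intro y hy
      rcases Finset.mem_union.mp hy with h | h
      · exact hGP y h
      · obtain ⟨j, hj, hyj⟩ := Finset.mem_sup.mp h
        exact hb' j hj y hyj
    have tri := htri (G ∪ I.sup b) {p} (b i) (by
      intro y hy
      rcases Finset.mem_union.mp hy with h | h
      · rcases Finset.mem_union.mp h with h' | h'
        · exact hsupgood y h'
        · rw [Finset.mem_singleton] at h'; subst h'
          exact hGP y hpG
      · exact hb i (Finset.mem_insert_self i I) y h) (by simp)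
    have e1 : (G ∪ I.sup b) ∪ {p} = G ∪ I.sup b := by
      apply Finset.union_eq_left.mpr
      intro y hy
      rw [Finset.mem_singleton] at hy; subst hy
      exact Finset.mem_union_left _ hpG
    have e2 : ({p} : Finset Y) ∪ b i = b i := by
      apply Finset.union_eq_right.mpr
      intro y hy
      rw [Finset.mem_singleton] at hy; subst hy
      exact hpb
    have e3 : (G ∪ I.sup b) ∪ b i = G ∪ (insert i I).sup b := by
      rw [Finset.sup_insert]
      ext y
      simp only [Finset.mem_union, Finset.sup_eq_union]
      tauto
    rw [e1, e2, e3] at tri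
    rw [Finset.sum_insert hi]
    linarith

end Generic

section DivLemmas

variable {X : Type*} (δ : Finset X → ℝ)

lemma div_single (hδ : IsDiversity δ) (x : X) : δ {x} = 0 := (hδ.2.1 {x}).mpr (by simp)

lemma memP_nonneg (hδ : IsDiversity δ) {f : Finset X → ℝ} (hf : MemP δ f) (A : Finset X) : 0 ≤ f A := by
  have h := hf.2 {A}
  simp only [Finset.sup_singleton, Finset.sum_singleton, id] at h
  exact le_trans (hδ.1 A) h

lemma hfun_memP (hδ : IsDiversity δ) (x : X) : MemP δ (hfun δ x) := by
  constructor
  · show δ (∅ ∪ {x}) = 0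
    rw [Finset.empty_union]
    exact div_single δ hδ x
  · intro 𝓐
    have chain := div_chain δ (fun _ => True) (fun A B C _ hB => hδ.2.2 A B C hB)
      {x} (fun _ _ => trivial) 𝓐 (fun A => insert x A) (fun _ _ _ _ => trivial)
      (fun A _ => ⟨x, Finset.mem_insert_self x A, Finset.mem_singleton_self x⟩)
    have hsub : 𝓐.sup id ⊆ {x} ∪ 𝓐.sup (fun A => insert x A) := by
      intro y hy
      obtain ⟨A, hA, hyA⟩ := Finset.mem_sup.mp hy
      exact Finset.mem_union_right _
        (Finset.mem_sup.mpr ⟨A, hA, Finset.mem_insert_of_mem hyA⟩)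
    have mono := div_mono δ (fun _ => True) (fun b _ => div_single δ hδ b)
      (fun A B C _ hB => hδ.2.2 A B C hB) (𝓐.sup id)
      ({x} ∪ 𝓐.sup (fun A => insert x A)) hsub (fun _ _ => trivial)
    have hterm : ∀ A : Finset X, δ (insert x A) = hfun δ x A := by
      intro A
      show δ (insert x A) = δ (A ∪ {x})
      congr 1
      ext y
      simp only [Finset.mem_insert, Finset.mem_union, Finset.mem_singleton]
      tauto
    rw [div_single δ hδ x, zero_add] at chain
    calc δ (𝓐.sup id) ≤ δ ({x} ∪ 𝓐.sup (fun A => insert x A)) := mono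
      _ ≤ ∑ A ∈ 𝓐, δ (insert x A) := chain
      _ = ∑ A ∈ 𝓐, hfun δ x A := Finset.sum_congr rfl fun A _ => hterm A

lemma hfun_memT (hδ : IsDiversity δ) (x : X) : MemT δ (hfun δ x) := by
  refine ⟨hfun_memP δ hδ x, ?_⟩
  intro g hg hle
  have hg0 : g {x} = 0 := by
    have h1 : g {x} ≤ hfun δ x {x} := hle {x}
    have h2 : hfun δ x {x} = 0 := by
      show δ ({x} ∪ {x}) = 0
      rw [Finset.union_self]
      exact div_single δ hδ x
    exact le_antisymm (h2 ▸ h1) (memP_nonneg δ hδ hg {x})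
  funext A
  apply le_antisymm (hle A)
  by_cases hAx : A = ({x} : Finset X)
  · subst hAx
    rw [hg0]
    show δ ({x} ∪ {x}) ≤ 0
    rw [Finset.union_self, div_single δ hδ x]
  · have hsum := hg.2 {A, {x}}
    rw [Finset.sum_pair hAx] at hsum
    have hsup : ({A, {x}} : Finset (Finset X)).sup id = A ∪ {x} := by
      simp [Finset.sup_insert, Finset.sup_eq_union]
    rw [hsup, hg0] at hsum
    show δ (A ∪ {x}) ≤ g A
    linarith

end DivLemmas

/-- if `δ̂` makes `T_X` a diversity and satisfies
`δ̂ (κ(Y) ∪ {f}) = f Y` for all finite `Y ⊆ X` and `f ∈ T_X`, then `δ̂ F ≥ δ_T F`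
for every finite `F ⊆ T_X`. -/
theorem deltaT_minimal {X : Type*} (δ : Finset X → ℝ) (hδ : IsDiversity δ)
    (δhat : Finset (Finset X → ℝ) → ℝ)
    (h1 : ∀ F : Finset (Finset X → ℝ), (∀ f ∈ F, MemT δ f) → 0 ≤ δhat F)
    (h2 : ∀ F : Finset (Finset X → ℝ), (∀ f ∈ F, MemT δ f) → (δhat F = 0 ↔ F.card ≤ 1))
    (h3 : ∀ F G H : Finset (Finset X → ℝ), (∀ f ∈ F ∪ G ∪ H, MemT δ f) → G ≠ ∅ →
      δhat (F ∪ H) ≤ δhat (F ∪ G) + δhat (G ∪ H))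
    (h4 : ∀ (Y : Finset X) (f : Finset X → ℝ), MemT δ f →
      δhat (insert f (Y.image (hfun δ))) = f Y) :
    ∀ F : Finset (Finset X → ℝ), (∀ f ∈ F, MemT δ f) → deltaT δ F ≤ δhat F := by
  intro F hF
  unfold deltaT
  by_cases hFe : F = ∅
  · rw [if_pos hFe, hFe]
    exact h1 ∅ (by simp)
  · rw [if_neg hFe]
    apply Real.sSup_le _ (h1 F hF)
    rintro r ⟨𝓐, rfl⟩
    rw [sub_le_iff_le_add]
    have hFne : (F : Set (Finset X → ℝ)).Nonempty := by
      simpa using Finset.nonempty_iff_ne_empty.mpr hFe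
    have hex : ∀ A : Finset X,
        ∃ f ∈ F, f A = sInf ((fun f => f A) '' (F : Set (Finset X → ℝ))) := by
      intro A
      have hfin : ((fun f => f A) '' (F : Set (Finset X → ℝ))).Finite :=
        F.finite_toSet.image _
      have hne : ((fun f => f A) '' (F : Set (Finset X → ℝ))).Nonempty := hFne.image _
      obtain ⟨f, hfF, hval⟩ := hne.csInf_mem hfin
      exact ⟨f, hfF, hval⟩
    choose g hgF hgval using hex
    set b : Finset X → Finset (Finset X → ℝ) :=
      fun A => insert (g A) (A.image (hfun δ)) with hbdef
    have hbgood : ∀ A ∈ 𝓐, ∀ f ∈ b A, MemT δ f := by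
      intro A _ f hf
      rcases Finset.mem_insert.mp hf with h | h
      · subst h; exact hF _ (hgF A)
      · obtain ⟨x, _, rfl⟩ := Finset.mem_image.mp h
        exact hfun_memT δ hδ x
    have chain := div_chain δhat (MemT δ) h3 F hF 𝓐 b hbgood
      (fun A _ => ⟨g A, Finset.mem_insert_self _ _, hgF A⟩)
    have hsum : ∑ A ∈ 𝓐, δhat (b A)
        = ∑ A ∈ 𝓐, sInf ((fun f => f A) '' (F : Set (Finset X → ℝ))) := by
      apply Finset.sum_congr rfl
      intro A _
      rw [hbdef, h4 A (g A) (hF _ (hgF A)), hgval A]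
    have hgoodsup : ∀ f ∈ F ∪ 𝓐.sup b, MemT δ f := by
      intro f hf
      rcases Finset.mem_union.mp hf with h | h
      · exact hF f h
      · obtain ⟨A, hA, hfA⟩ := Finset.mem_sup.mp h
        exact hbgood A hA f hfA
    have hY : δ (𝓐.sup id) ≤ δhat (F ∪ 𝓐.sup b) := by
      by_cases hYe : 𝓐.sup id = (∅ : Finset X)
      · rw [hYe, (hδ.2.1 ∅).mpr (by simp)]
        exact h1 _ hgoodsup
      · obtain ⟨y, hy⟩ := Finset.nonempty_iff_ne_empty.mpr hYe
        have hk : δhat ((𝓐.sup id).image (hfun δ)) = δ (𝓐.sup id) := by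
          have h4' := h4 (𝓐.sup id) (hfun δ y) (hfun_memT δ hδ y)
          rw [Finset.insert_eq_self.mpr (Finset.mem_image_of_mem _ hy)] at h4'
          rw [h4']
          show δ (𝓐.sup id ∪ {y}) = δ (𝓐.sup id)
          congr 1
          exact Finset.union_eq_left.mpr (by simpa using hy)
        rw [← hk]
        apply div_mono δhat (MemT δ)
          (fun f hf => (h2 {f} (by simpa using hf)).mpr (by simp)) h3
        · intro h hh
          obtain ⟨x, hx, rfl⟩ := Finset.mem_image.mp hh
          obtain ⟨A, hA, hxA⟩ := Finset.mem_sup.mp hx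
          exact Finset.mem_union_right _
            (Finset.mem_sup.mpr ⟨A, hA,
              Finset.mem_insert_of_mem (Finset.mem_image_of_mem _ hxA)⟩)
        · exact hgoodsup
    calc δ (𝓐.sup id) ≤ δhat (F ∪ 𝓐.sup b) := hY
      _ ≤ δhat F + ∑ A ∈ 𝓐, δhat (b A) := chain
      _ = δhat F + ∑ A ∈ 𝓐, sInf ((fun f => f A) '' (F : Set (Finset X → ℝ))) := by
          rw [hsum]


end
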